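/- Let (E, L, E) be a labeled space with E the smallest non-degenerate accommodating set. Suppose (E, L, E) is strongly cofinal and every B ∈ E \ E_reg lies in H(A) for every nonempty A ∈ E. Then (E, L, E) is minimal (the only hereditary saturated subsets of E are {∅} and E). -/

import Mathlib

universe u v

variable {V : Type u} {Λ : Type v}

/-- The relative range `r(S, α)` of a set of vertices along a labeled path. -/
def relRange (Edge : V → Λ → V → Prop) : Set V → List Λ → Set V
  | S, [] => S
  | S, a :: α => relRange Edge {w | ∃ u ∈ S, Edge u a w} α

/-- The range `r(α)` of a labeled path. -/
def lrange (Edge : V → Λ → V → Prop) (α : List Λ) : Set V :=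
  relRange Edge Set.univ α

/-- `α` is a (nonempty) labeled path of the labeled graph. -/
def IsLP (Edge : V → Λ → V → Prop) (α : List Λ) : Prop :=
  α ≠ [] ∧ (lrange Edge α).Nonempty

/-- `L(SE¹)`: labels of edges emitted from `S`. -/
def edgeLabels (Edge : V → Λ → V → Prop) (S : Set V) : Set Λ :=
  {a | ∃ u ∈ S, ∃ w, Edge u a w}

/-- `S` is regular: every nonempty `B ∈ ℬ` with `B ⊆ S` emits a finite nonzero set of labels. -/
def RegularSet (Edge : V → Λ → V → Prop) (ℬ : Set (Set V)) (S : Set V) : Prop :=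
  ∀ B ∈ ℬ, B ⊆ S → B.Nonempty →
    (edgeLabels Edge B).Finite ∧ (edgeLabels Edge B).Nonempty

/-- `H ⊆ ℬ` is hereditary. -/
def Hered (Edge : V → Λ → V → Prop) (ℬ H : Set (Set V)) : Prop :=
  H ⊆ ℬ ∧ (∀ A ∈ H, ∀ α : List Λ, IsLP Edge α → relRange Edge A α ∈ H) ∧
    (∀ A ∈ H, ∀ B ∈ H, A ∪ B ∈ H) ∧ (∀ A ∈ H, ∀ B ∈ ℬ, B ⊆ A → B ∈ H)

/-- `H` is saturated. -/
def Satur (Edge : V → Λ → V → Prop) (ℬ H : Set (Set V)) : Prop :=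
  ∀ A ∈ ℬ, RegularSet Edge ℬ A →
    (∀ α : List Λ, IsLP Edge α → relRange Edge A α ∈ H) → A ∈ H

/-- `H(A)`: sets covered by finitely many relative ranges `r(A, αᵢ)`, `αᵢ ∈ L^#(E)`. -/
def HSet (Edge : V → Λ → V → Prop) (ℬ : Set (Set V)) (A : Set V) : Set (Set V) :=
  {B ∈ ℬ | ∃ l : List (List Λ), (∀ α ∈ l, α = [] ∨ IsLP Edge α) ∧
    B ⊆ ⋃ α ∈ l, relRange Edge A α}

/-- `S(H(A))`: the saturation of `H(A)`. -/
def SHSet (Edge : V → Λ → V → Prop) (ℬ : Set (Set V)) (A : Set V) : Set (Set V) :=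
  {B ∈ ℬ | ∃ n : ℕ,
    (∀ β : List Λ, (β = [] ∨ IsLP Edge β) → β.length = n →
      relRange Edge B β ∈ HSet Edge ℬ A) ∧
    (∀ γ : List Λ, (γ = [] ∨ IsLP Edge γ) → γ.length < n →
      ∃ C ∈ HSet Edge ℬ A, ∃ D ∈ ℬ, RegularSet Edge ℬ D ∧ relRange Edge B γ = C ∪ D)}

/-- `ℬ` is an accommodating set for the labeled graph. -/
def Accommodating (Edge : V → Λ → V → Prop) (ℬ : Set (Set V)) : Prop :=
  (∀ α : List Λ, IsLP Edge α → lrange Edge α ∈ ℬ) ∧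
    (∀ A ∈ ℬ, ∀ α : List Λ, IsLP Edge α → relRange Edge A α ∈ ℬ) ∧
    (∀ A ∈ ℬ, ∀ B ∈ ℬ, A ∪ B ∈ ℬ) ∧ (∀ A ∈ ℬ, ∀ B ∈ ℬ, A ∩ B ∈ ℬ)

/-- `ℬ` is non-degenerate: closed under relative complements (and contains `∅`). -/
def NonDegenerate (ℬ : Set (Set V)) : Prop :=
  (∅ : Set V) ∈ ℬ ∧ ∀ A ∈ ℬ, ∀ B ∈ ℬ, A \ B ∈ ℬ

/-- The labeled space is weakly left-resolving. -/
def WLR (Edge : V → Λ → V → Prop) (ℬ : Set (Set V)) : Prop :=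
  ∀ A ∈ ℬ, ∀ B ∈ ℬ, ∀ α : List Λ, IsLP Edge α →
    relRange Edge (A ∩ B) α = relRange Edge A α ∩ relRange Edge B α

/-- `ℬ` is the smallest non-degenerate accommodating set. -/
def SmallestAccom (Edge : V → Λ → V → Prop) (ℬ : Set (Set V)) : Prop :=
  Accommodating Edge ℬ ∧ NonDegenerate ℬ ∧
    ∀ ℬ' : Set (Set V), Accommodating Edge ℬ' → NonDegenerate ℬ' → ℬ ⊆ ℬ'

/-- `x_{[1,n]}`: the length-`n` prefix of an infinite word. -/
def wordPrefix (x : ℕ → Λ) (n : ℕ) : List Λ := List.ofFn fun i : Fin n => x i.val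

/-- `x` lies in the closure of `L(E^∞)`: all finite prefixes are labeled paths. -/
def InfWord (Edge : V → Λ → V → Prop) (x : ℕ → Λ) : Prop :=
  ∀ n : ℕ, 1 ≤ n → IsLP Edge (wordPrefix x n)

/-- Strong cofinality of a labeled space. -/
def StrCofinal (Edge : V → Λ → V → Prop) (ℬ : Set (Set V)) : Prop :=
  ∀ A ∈ ℬ, A.Nonempty → ∀ x : ℕ → Λ, InfWord Edge x →
    ∃ N : ℕ, 1 ≤ N ∧ ∃ l : List (List Λ), (∀ α ∈ l, IsLP Edge α) ∧
      lrange Edge (wordPrefix x N) ⊆ ⋃ α ∈ l, relRange Edge A α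

/-- Minimality: the only hereditary saturated subsets of `ℬ` are `{∅}` and `ℬ`. -/
def MinimalLS (Edge : V → Λ → V → Prop) (ℬ : Set (Set V)) : Prop :=
  ∀ H : Set (Set V), Hered Edge ℬ H → Satur Edge ℬ H → H ⊆ {∅} ∨ H = ℬ

/-- `L(SEⁿ)`: labels of paths of length `n` with source in `S`. -/
def labelsOfLen (Edge : V → Λ → V → Prop) (S : Set V) (n : ℕ) : Set (List Λ) :=
  {β | β.length = n ∧ (relRange Edge S β).Nonempty}

/-- The labeled space is disagreeable. -/
def Disagreeable (Edge : V → Λ → V → Prop) (ℬ : Set (Set V)) : Prop :=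
  ∀ A ∈ ℬ, A.Nonempty → ∀ β : List Λ, IsLP Edge β →
    ∃ n : ℕ, 1 ≤ n ∧ labelsOfLen Edge A (β.length * n) ≠ {(List.replicate n β).flatten}

/-- `(α, A)` is a cycle. -/
def IsCycle (Edge : V → Λ → V → Prop) (ℬ : Set (Set V)) (α : List Λ) (A : Set V) : Prop :=
  IsLP Edge α ∧ A ∈ ℬ ∧ A.Nonempty ∧ ∀ B ∈ ℬ, B ⊆ A → relRange Edge B α = B

/-- The cycle `(α, A)` has an exit. -/
def CycleHasExit (Edge : V → Λ → V → Prop) (ℬ : Set (Set V)) (α : List Λ) (A : Set V) : Prop :=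
  ∃ t : ℕ, 1 ≤ t ∧ t ≤ α.length ∧ ∃ B ∈ ℬ, B.Nonempty ∧
    B ⊆ relRange Edge A (α.take t) ∧
    edgeLabels Edge B ≠ {a : Λ | α[t % α.length]? = some a}

/-- The cycle `(α, A)` has no exits. -/
def CycleNoExit (Edge : V → Λ → V → Prop) (ℬ : Set (Set V)) (α : List Λ) (A : Set V) : Prop :=
  ∀ t : ℕ, 1 ≤ t → t ≤ α.length → ∀ B ∈ ℬ, B.Nonempty →
    B ⊆ relRange Edge A (α.take t) →
    RegularSet Edge ℬ B ∧ edgeLabels Edge B = {a : Λ | α[t % α.length]? = some a}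

/-- Condition (L): every cycle has an exit. -/
def CondL (Edge : V → Λ → V → Prop) (ℬ : Set (Set V)) : Prop :=
  ∀ (α : List Λ) (A : Set V), IsCycle Edge ℬ α A → CycleHasExit Edge ℬ α A

/-- `α` is a loop at `A`. -/
def IsLoop (Edge : V → Λ → V → Prop) (α : List Λ) (A : Set V) : Prop :=
  IsLP Edge α ∧ A ⊆ relRange Edge A α

/-- The loop `(α, A)` has an exit. -/
def LoopHasExit (Edge : V → Λ → V → Prop) (α : List Λ) (A : Set V) : Prop :=
  {β : List Λ | ∃ k : ℕ, 1 ≤ k ∧ k ≤ α.length ∧ β = α.take k} ⊂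
      {β : List Λ | 1 ≤ β.length ∧ β.length ≤ α.length ∧ (relRange Edge A β).Nonempty} ∨
    A ⊂ relRange Edge A α

/-- `β` is an irreducible path: not a repetition of a proper initial path. -/
def IrreduciblePath (β : List Λ) : Prop :=
  ∀ k : ℕ, 1 ≤ k → k < β.length → ∀ m : ℕ, β ≠ (List.replicate m (β.take k)).flatten

/-- The generalized vertex `[v]_l`. -/
def gvClass (Edge : V → Λ → V → Prop) (l : ℕ) (v : V) : Set V :=
  {w | ∀ β : List Λ, 1 ≤ β.length → β.length ≤ l → (v ∈ lrange Edge β ↔ w ∈ lrange Edge β)}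

/-- `s(x)`: sources of infinite paths labeled by `x`. -/
def srcInf (Edge : V → Λ → V → Prop) (x : ℕ → Λ) : Set V :=
  {w | ∃ p : ℕ → V, p 0 = w ∧ ∀ n : ℕ, Edge (p n) (x n) (p (n + 1))}


lemma relRange_nil (Edge : V → Λ → V → Prop) (S : Set V) : relRange Edge S [] = S := rfl

lemma relRange_cons (Edge : V → Λ → V → Prop) (S : Set V) (a : Λ) (α : List Λ) :
    relRange Edge S (a :: α) = relRange Edge {w | ∃ u ∈ S, Edge u a w} α := rfl

lemma relRange_append (Edge : V → Λ → V → Prop) (S : Set V) (γ α : List Λ) :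
    relRange Edge S (γ ++ α) = relRange Edge (relRange Edge S γ) α := by
  induction γ generalizing S with
  | nil => rfl
  | cons a γ ih => simpa [relRange_cons] using ih _

lemma relRange_mono (Edge : V → Λ → V → Prop) {S T : Set V} (h : S ⊆ T) (α : List Λ) :
    relRange Edge S α ⊆ relRange Edge T α := by
  induction α generalizing S T with
  | nil => exact h
  | cons a α ih =>
    exact ih fun w hw => by obtain ⟨u, hu, he⟩ := hw; exact ⟨u, h hu, he⟩

lemma relRange_subset_lrange (Edge : V → Λ → V → Prop) (S : Set V) (α : List Λ) :
    relRange Edge S α ⊆ lrange Edge α :=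
  relRange_mono Edge (Set.subset_univ S) α

lemma relRange_empty (Edge : V → Λ → V → Prop) (α : List Λ) :
    relRange Edge (∅ : Set V) α = ∅ := by
  induction α with
  | nil => rfl
  | cons a α ih =>
    rw [relRange_cons, show {w | ∃ u ∈ (∅ : Set V), Edge u a w} = (∅ : Set V) by simp]
    exact ih

lemma relRange_union (Edge : V → Λ → V → Prop) (S T : Set V) (α : List Λ) :
    relRange Edge (S ∪ T) α = relRange Edge S α ∪ relRange Edge T α := by
  induction α generalizing S T with
  | nil => rfl
  | cons a α ih =>
    rw [relRange_cons, show {w | ∃ u ∈ S ∪ T, Edge u a w} =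
      {w | ∃ u ∈ S, Edge u a w} ∪ {w | ∃ u ∈ T, Edge u a w} by
        ext w; simp [or_and_right, exists_or], ih, relRange_cons, relRange_cons]

lemma list_biUnion_cons {ι : Type*} (g : ι → Set V) (a : ι) (l : List ι) :
    (⋃ i ∈ a :: l, g i) = g a ∪ ⋃ i ∈ l, g i := by
  simp [List.mem_cons, Set.iUnion_or, Set.iUnion_union_distrib]

lemma relRange_list_biUnion (Edge : V → Λ → V → Prop) {ι : Type*} (g : ι → Set V)
    (l : List ι) (γ : List Λ) :
    relRange Edge (⋃ i ∈ l, g i) γ = ⋃ i ∈ l, relRange Edge (g i) γ := by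
  induction l with
  | nil => simp [relRange_empty]
  | cons a l ih => rw [list_biUnion_cons, relRange_union, ih, list_biUnion_cons]

lemma list_biUnion_mem {H : Set (Set V)} (h0 : (∅ : Set V) ∈ H)
    (hU : ∀ A ∈ H, ∀ B ∈ H, A ∪ B ∈ H) {ι : Type*} (l : List ι) (g : ι → Set V)
    (hg : ∀ i ∈ l, g i ∈ H) : (⋃ i ∈ l, g i) ∈ H := by
  induction l with
  | nil => simpa
  | cons a l ih =>
    rw [list_biUnion_cons]
    exact hU _ (hg a (by simp)) _ (ih fun i hi => hg i (List.mem_cons_of_mem _ hi))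


lemma build_word (P : List Λ → Prop) (h0 : P [])
    (hstep : ∀ γ, P γ → ∃ α, α ≠ [] ∧ P (γ ++ α)) :
    ∃ β : ℕ → List Λ, β 0 = [] ∧ (∀ k, P (β k)) ∧
      ∀ k, ∃ α : List Λ, α ≠ [] ∧ β (k + 1) = β k ++ α := by
  have hstep' : ∀ p : {γ // P γ}, ∃ q : {γ // P γ}, ∃ α, α ≠ [] ∧ q.1 = p.1 ++ α := by
    rintro ⟨γ, hγ⟩
    obtain ⟨α, hα, hP⟩ := hstep γ hγ
    exact ⟨⟨γ ++ α, hP⟩, α, hα, rfl⟩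
  choose f hf using hstep'
  refine ⟨fun k => (f^[k] ⟨[], h0⟩).1, rfl, fun k => (f^[k] ⟨[], h0⟩).2, fun k => ?_⟩
  show ∃ α, α ≠ [] ∧ (f^[k + 1] ⟨[], h0⟩).1 = (f^[k] ⟨[], h0⟩).1 ++ α
  rw [Function.iterate_succ_apply']
  exact hf _

lemma exists_word_of_chain {β : ℕ → List Λ} (h0 : β 0 = [])
    (hsucc : ∀ k, ∃ α : List Λ, α ≠ [] ∧ β (k + 1) = β k ++ α) :
    ∃ x : ℕ → Λ, ∀ n, wordPrefix x n = (β n).take n := by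
  have hpre1 : ∀ k, β k <+: β (k + 1) := fun k => by
    obtain ⟨α, _, h⟩ := hsucc k; exact ⟨α, h.symm⟩
  have hpre : ∀ j k, j ≤ k → β j <+: β k := by
    intro j k h
    induction h with
    | refl => exact List.prefix_rfl
    | step _ ih => exact ih.trans (hpre1 _)
  have hlen : ∀ k, k ≤ (β k).length := by
    intro k
    induction k with
    | zero => simp
    | succ k ih =>
      obtain ⟨α, hα, h⟩ := hsucc k
      rw [h, List.length_append]
      have : 1 ≤ α.length := List.length_pos_iff.2 hα
      omega
  have hβ1 : β 1 ≠ [] := by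
    intro h
    have := hlen 1
    rw [h] at this
    simp at this
  refine ⟨fun n => (β (n + 1)).getD n ((β 1).head hβ1), fun n => ?_⟩
  apply List.ext_getElem
  · simp [wordPrefix, List.length_take, Nat.min_eq_left (hlen n)]
  · intro i h1 h2
    have hin : i < n := by simpa [wordPrefix] using h1
    have hlt : i < (β (i + 1)).length := lt_of_lt_of_le (Nat.lt_succ_self i) (hlen (i + 1))
    simp only [wordPrefix, List.getElem_ofFn, List.getElem_take]
    rw [List.getD_eq_getElem _ _ hlt]
    exact (hpre (i + 1) n hin).getElem hlt


/-- if the labeled space is strongly cofinal and every non-regular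
`B ∈ ℰ` lies in `H(A)` for every nonempty `A ∈ ℰ`, then the labeled space is minimal. -/
theorem cofinal_and_singular_in_H_implies_minimal (Edge : V → Λ → V → Prop)
    (ℰ : Set (Set V)) (hsm : SmallestAccom Edge ℰ) (hwlr : WLR Edge ℰ)
    (hcof : StrCofinal Edge ℰ)
    (hsing : ∀ A ∈ ℰ, A.Nonempty → ∀ B ∈ ℰ, ¬ RegularSet Edge ℰ B → B ∈ HSet Edge ℰ A) :
    MinimalLS Edge ℰ := by
  intro H hH hS
  by_cases hsub : H ⊆ {∅}
  · exact Or.inl hsub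
  right
  obtain ⟨A, hA, hAne'⟩ : ∃ A ∈ H, A ≠ ∅ := by
    by_contra hc
    push_neg at hc
    exact hsub fun S hS' => hc S hS'
  have hAne : A.Nonempty := Set.nonempty_iff_ne_empty.2 hAne'
  obtain ⟨hacc, hnd, -⟩ := hsm
  have hAℰ : A ∈ ℰ := hH.1 hA
  have hempH : (∅ : Set V) ∈ H := hH.2.2.2 A hA ∅ hnd.1 (Set.empty_subset A)
  have hne_of_not : ∀ {S : Set V}, S ∉ H → S.Nonempty := fun {S} h =>
    Set.nonempty_iff_ne_empty.2 fun e => h (e ▸ hempH)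
  have hHSetsub : ∀ C ∈ HSet Edge ℰ A, C ∈ H := by
    intro C hC
    obtain ⟨hCℰ, l, hl, hsubl⟩ := hC
    have hmem : (⋃ α ∈ l, relRange Edge A α) ∈ H := by
      refine list_biUnion_mem hempH hH.2.2.1 l _ fun α hα => ?_
      rcases hl α hα with h | h
      · rw [h, relRange_nil]; exact hA
      · exact hH.2.1 A hA α h
    exact hH.2.2.2 _ hmem C hCℰ hsubl
  apply Set.Subset.antisymm hH.1
  intro B hBℰ
  by_contra hBH
  -- one-step extension
  have hstep : ∀ γ : List Λ, ((γ = [] ∨ IsLP Edge γ) ∧ relRange Edge B γ ∉ H) →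
      ∃ α, α ≠ [] ∧ ((γ ++ α = [] ∨ IsLP Edge (γ ++ α)) ∧ relRange Edge B (γ ++ α) ∉ H) := by
    rintro γ ⟨hγ, hγH⟩
    have hCℰ : relRange Edge B γ ∈ ℰ := by
      rcases hγ with h | h
      · rw [h, relRange_nil]; exact hBℰ
      · exact hacc.2.1 B hBℰ γ h
    have hex : ∃ α, IsLP Edge α ∧ relRange Edge (relRange Edge B γ) α ∉ H := by
      by_cases hreg : RegularSet Edge ℰ (relRange Edge B γ)
      · have hnall : ¬ ∀ α, IsLP Edge α → relRange Edge (relRange Edge B γ) α ∈ H :=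
          fun h => hγH (hS _ hCℰ hreg h)
        push_neg at hnall
        exact hnall
      · exact absurd (hHSetsub _ (hsing A hAℰ hAne _ hCℰ hreg)) hγH
    obtain ⟨α, hα, hnot⟩ := hex
    rw [← relRange_append] at hnot
    have hne : (relRange Edge B (γ ++ α)).Nonempty := hne_of_not hnot
    refine ⟨α, hα.1, Or.inr ⟨?_, ?_⟩, hnot⟩
    · intro h
      exact hα.1 (List.append_eq_nil_iff.mp h).2
    · exact hne.mono (relRange_subset_lrange Edge B _)
  obtain ⟨β, hβ0, hβP, hβsucc⟩ := build_word _
    ⟨Or.inl rfl, by rw [relRange_nil]; exact hBH⟩ hstep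
  obtain ⟨x, hx⟩ := exists_word_of_chain hβ0 hβsucc
  have hlen : ∀ k, k ≤ (β k).length := by
    intro k
    induction k with
    | zero => simp
    | succ k ih =>
      obtain ⟨α, hα, h⟩ := hβsucc k
      rw [h, List.length_append]
      have : 1 ≤ α.length := List.length_pos_iff.2 hα
      omega
  -- the prefixes are not in H
  have htake : ∀ n, relRange Edge B ((β n).take n) ∉ H := by
    intro n hmem
    have hβn := (hβP n).2
    rw [← List.take_append_drop n (β n), relRange_append] at hβn
    rcases eq_or_ne ((β n).drop n) [] with h | h
    · rw [h, relRange_nil] at hβn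
      exact hβn hmem
    · have hne : (relRange Edge (relRange Edge B ((β n).take n)) ((β n).drop n)).Nonempty :=
        hne_of_not hβn
      have hLP : IsLP Edge ((β n).drop n) :=
        ⟨h, hne.mono (relRange_subset_lrange Edge _ _)⟩
      exact hβn (hH.2.1 _ hmem _ hLP)
  have hInf : InfWord Edge x := by
    intro n hn
    rw [hx n]
    refine ⟨?_, (hne_of_not (htake n)).mono (relRange_subset_lrange Edge B _)⟩
    intro h
    have := congrArg List.length h
    rw [List.length_take] at this
    simp only [List.length_nil] at this
    have := hlen n
    omega
  obtain ⟨N, hN1, l, hlLP, hsubl⟩ := hcof A hAℰ hAne x hInf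
  rw [hx N] at hsubl
  -- final contradiction
  have h1 : relRange Edge B (β N) =
      relRange Edge (relRange Edge B ((β N).take N)) ((β N).drop N) := by
    rw [← relRange_append, List.take_append_drop]
  have h2 : relRange Edge B (β N) ⊆ ⋃ α ∈ l, relRange Edge A (α ++ (β N).drop N) := by
    rw [h1]
    calc relRange Edge (relRange Edge B ((β N).take N)) ((β N).drop N)
        ⊆ relRange Edge (lrange Edge ((β N).take N)) ((β N).drop N) :=
          relRange_mono _ (relRange_subset_lrange _ _ _) _
      _ ⊆ relRange Edge (⋃ α ∈ l, relRange Edge A α) ((β N).drop N) :=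
          relRange_mono _ hsubl _
      _ = ⋃ α ∈ l, relRange Edge (relRange Edge A α) ((β N).drop N) :=
          relRange_list_biUnion _ _ _ _
      _ = ⋃ α ∈ l, relRange Edge A (α ++ (β N).drop N) := by
          simp only [relRange_append]
  have hUH : (⋃ α ∈ l, relRange Edge A (α ++ (β N).drop N)) ∈ H := by
    refine list_biUnion_mem hempH hH.2.2.1 l _ fun α hα => ?_
    by_cases he : (lrange Edge (α ++ (β N).drop N)).Nonempty
    · exact hH.2.1 A hA _ ⟨fun h => (hlLP α hα).1 (List.append_eq_nil_iff.mp h).1, he⟩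
    · have hemp : relRange Edge A (α ++ (β N).drop N) = ∅ := by
        rw [← Set.not_nonempty_iff_eq_empty]
        exact fun h => he (h.mono (relRange_subset_lrange Edge A _))
      rw [hemp]; exact hempH
  have hβNℰ : relRange Edge B (β N) ∈ ℰ := by
    rcases (hβP N).1 with h | h
    · rw [h, relRange_nil]; exact hBℰ
    · exact hacc.2.1 B hBℰ (β N) h
  exact (hβP N).2 (hH.2.2.2 _ hUH _ hβNℰ h2)
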